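/- There exists a constant K > 0 depending only on C such that for every ε with 0 < ε ≤ 1 and every u ∈ H, p ∈ V, the quantity ‖u‖_H + |p|_V̄ + ε‖p‖_V is bounded above and below, up to the factor K, by sup over (v, q) ∈ H × V with (v, q) ≠ (0, 0) of [ a(u, v) + b(v, p) − b(u, q) + ε² c(p, q) ] / ( ‖v‖_H + |q|_V̄ + ε‖q‖_V ); that is, K⁻¹ ( ‖u‖_H + |p|_V̄ + ε‖p‖_V ) ≤ sup_{(v,q)≠(0,0)} [ a(u,v) + b(v,p) − b(u,q) + ε² c(p,q) ] / ( ‖v‖_H + |q|_V̄ + ε‖q‖_V ) ≤ K ( ‖u‖_H + |p|_V̄ + ε‖p‖_V ). -/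
import Mathlib


/-- The weaker seminorm |q|_V̄ := sup_{v ∈ H, v ≠ 0} b(v, q)/‖v‖. -/
noncomputable def weakSeminorm {H V : Type*}
    [NormedAddCommGroup H] [InnerProductSpace ℝ H]
    [NormedAddCommGroup V] [InnerProductSpace ℝ V]
    (b : H →ₗ[ℝ] V →ₗ[ℝ] ℝ) (q : V) : ℝ :=
  sSup {r : ℝ | ∃ v : H, v ≠ 0 ∧ r = b v q / ‖v‖}

section Helpers
variable {H V : Type*} [NormedAddCommGroup H] [InnerProductSpace ℝ H]
  [NormedAddCommGroup V] [InnerProductSpace ℝ V]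
  (b : H →ₗ[ℝ] V →ₗ[ℝ] ℝ) {C : ℝ}

lemma ws_bdd (hb : ∀ (v : H) (q : V), |b v q| ≤ C * ‖v‖ * ‖q‖) (q : V) :
    ∀ r ∈ {r : ℝ | ∃ v : H, v ≠ 0 ∧ r = b v q / ‖v‖}, r ≤ C * ‖q‖ := by
  rintro r ⟨v, hv, rfl⟩
  have hn : 0 < ‖v‖ := norm_pos_iff.mpr hv
  rw [div_le_iff₀ hn]
  calc b v q ≤ |b v q| := le_abs_self _
    _ ≤ C * ‖v‖ * ‖q‖ := hb v q
    _ = C * ‖q‖ * ‖v‖ := by ring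

lemma ws_le_of_forall {M : ℝ} (hM : 0 ≤ M) (q : V)
    (h : ∀ v : H, v ≠ 0 → b v q ≤ M * ‖v‖) : weakSeminorm b q ≤ M := by
  apply Real.sSup_le _ hM
  rintro r ⟨v, hv, rfl⟩
  rw [div_le_iff₀ (norm_pos_iff.mpr hv)]
  exact h v hv

lemma ws_nonneg (hb : ∀ (v : H) (q : V), |b v q| ≤ C * ‖v‖ * ‖q‖) (q : V) :
    0 ≤ weakSeminorm b q := by
  cases subsingleton_or_nontrivial H with
  | inl hsub =>
      have : {r : ℝ | ∃ v : H, v ≠ 0 ∧ r = b v q / ‖v‖} = ∅ := by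
        ext r; simp only [Set.mem_setOf_eq, Set.mem_empty_iff_false, iff_false]
        rintro ⟨v, hv, -⟩
        exact hv (Subsingleton.elim v 0)
      simp [weakSeminorm, this, Real.sSup_empty]
  | inr hnt =>
      obtain ⟨v, hv⟩ := exists_ne (0 : H)
      have hbdd : BddAbove {r : ℝ | ∃ v : H, v ≠ 0 ∧ r = b v q / ‖v‖} :=
        ⟨C * ‖q‖, ws_bdd b hb q⟩
      have h1 : b v q / ‖v‖ ≤ weakSeminorm b q := le_csSup hbdd ⟨v, hv, rfl⟩
      have h2 : b (-v) q / ‖-v‖ ≤ weakSeminorm b q := le_csSup hbdd ⟨-v, neg_ne_zero.mpr hv, rfl⟩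
      have : b (-v) q = -(b v q) := by simp
      rw [this, norm_neg] at h2
      have hn : 0 < ‖v‖ := norm_pos_iff.mpr hv
      rcases le_total 0 (b v q) with h | h
      · exact le_trans (div_nonneg h hn.le) h1
      · exact le_trans (div_nonneg (neg_nonneg.mpr h) hn.le) h2

lemma b_le_ws (hb : ∀ (v : H) (q : V), |b v q| ≤ C * ‖v‖ * ‖q‖)
    (v : H) (q : V) : b v q ≤ weakSeminorm b q * ‖v‖ := by
  by_cases hv : v = 0
  · simp [hv]
  · have hbdd : BddAbove {r : ℝ | ∃ v : H, v ≠ 0 ∧ r = b v q / ‖v‖} :=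
      ⟨C * ‖q‖, ws_bdd b hb q⟩
    have h1 : b v q / ‖v‖ ≤ weakSeminorm b q := le_csSup hbdd ⟨v, hv, rfl⟩
    have hn : 0 < ‖v‖ := norm_pos_iff.mpr hv
    calc b v q = b v q / ‖v‖ * ‖v‖ := by field_simp
      _ ≤ weakSeminorm b q * ‖v‖ := by
          exact mul_le_mul_of_nonneg_right h1 hn.le

lemma ws_zero (hb : ∀ (v : H) (q : V), |b v q| ≤ C * ‖v‖ * ‖q‖) :
    weakSeminorm b (0 : V) = 0 :=
  le_antisymm (ws_le_of_forall b le_rfl 0 (fun v _ => by simp)) (ws_nonneg b hb 0)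

end Helpers
lemma arith_upper (C u v P Q ep eq N : ℝ) (hC : 0 < C) (hu : 0 ≤ u) (hv : 0 ≤ v)
    (hP : 0 ≤ P) (hQ : 0 ≤ Q) (hep : 0 ≤ ep) (heq : 0 ≤ eq)
    (hN : N ≤ C * u * v + P * v + Q * u + C * ep * eq) :
    N ≤ (C + 1) * (u + P + ep) * (v + Q + eq) := by
  nlinarith [mul_nonneg hu hv, mul_nonneg hu hQ, mul_nonneg hu heq,
    mul_nonneg hP hv, mul_nonneg hP hQ, mul_nonneg hP heq,
    mul_nonneg hep hv, mul_nonneg hep hQ, mul_nonneg hep heq,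
    mul_nonneg (mul_nonneg hC.le hu) hv, mul_nonneg (mul_nonneg hC.le hu) hQ,
    mul_nonneg (mul_nonneg hC.le hu) heq, mul_nonneg (mul_nonneg hC.le hP) hv,
    mul_nonneg (mul_nonneg hC.le hP) hQ, mul_nonneg (mul_nonneg hC.le hP) heq,
    mul_nonneg (mul_nonneg hC.le hep) hv, mul_nonneg (mul_nonneg hC.le hep) hQ,
    mul_nonneg (mul_nonneg hC.le hep) heq]

lemma arith_key (C S Y X : ℝ) (hC : 0 < C) (hS : 0 ≤ S) (hY : 0 ≤ Y)
    (hX : X ≤ (1 + C) * Y + S) (hY2 : Y ^ 2 ≤ 2 * C * S * ((1 + C) * Y + S)) :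
    X ≤ ((1 + C) * (2 * C * (1 + C) + 2 * C + 1) + C + 2) * S := by
  rcases le_or_gt Y S with h | h
  · have h1 : (1 + C) * Y ≤ (1 + C) * S := by nlinarith
    have h2 : 0 ≤ (1 + C) * (2 * C * (1 + C) + 2 * C + 1) * S := by positivity
    nlinarith
  · have hYpos : 0 < Y := lt_of_le_of_lt hS h
    have hSsq : S * S ≤ S * Y := mul_le_mul_of_nonneg_left h.le hS
    have h3 : Y * Y ≤ (2 * C * (1 + C) + 2 * C) * S * Y := by nlinarith
    have h4 : Y ≤ (2 * C * (1 + C) + 2 * C) * S := le_of_mul_le_mul_right (by linarith) hYpos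
    have h5 : (1 + C) * Y ≤ (1 + C) * ((2 * C * (1 + C) + 2 * C) * S) := by nlinarith
    nlinarith

lemma arith_CK (C : ℝ) (hC : 0 < C) : C + 1 ≤ (1 + C) * (2 * C * (1 + C) + 2 * C + 1) + C + 2 := by
  nlinarith [sq_nonneg C, mul_pos hC hC]


/-- There exists a constant K > 0 depending only on C such that for every ε with
0 < ε ≤ 1 and every u ∈ H, p ∈ V, the quantity ‖u‖_H + |p|_V̄ + ε‖p‖_V is bounded above
and below, up to the factor K, by the supremum over (v, q) ≠ (0, 0) of
[a(u,v) + b(v,p) − b(u,q) + ε² c(p,q)] / (‖v‖_H + |q|_V̄ + ε‖q‖_V). -/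
theorem stmt_14 (C : ℝ) (hC : 0 < C) :
    ∃ K : ℝ, 0 < K ∧
      ∀ (H : Type) [NormedAddCommGroup H] [InnerProductSpace ℝ H] [CompleteSpace H]
        (V : Type) [NormedAddCommGroup V] [InnerProductSpace ℝ V] [CompleteSpace V]
        (a : H →ₗ[ℝ] H →ₗ[ℝ] ℝ) (c : V →ₗ[ℝ] V →ₗ[ℝ] ℝ) (b : H →ₗ[ℝ] V →ₗ[ℝ] ℝ),
        (∀ u v : H, a u v = a v u) →
        (∀ p q : V, c p q = c q p) →
        (∀ u v : H, |a u v| ≤ C * ‖u‖ * ‖v‖) →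
        (∀ u : H, C⁻¹ * ‖u‖ ^ 2 ≤ a u u) →
        (∀ p q : V, |c p q| ≤ C * ‖p‖ * ‖q‖) →
        (∀ p : V, C⁻¹ * ‖p‖ ^ 2 ≤ c p p) →
        (∀ (v : H) (q : V), |b v q| ≤ C * ‖v‖ * ‖q‖) →
        ∀ (ε : ℝ), 0 < ε → ε ≤ 1 →
          ∀ (u : H) (p : V),
            K⁻¹ * (‖u‖ + weakSeminorm b p + ε * ‖p‖) ≤
              sSup {r : ℝ | ∃ (v : H) (q : V), (v, q) ≠ (0, 0) ∧
                r = (a u v + b v p - b u q + ε ^ 2 * c p q) /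
                    (‖v‖ + weakSeminorm b q + ε * ‖q‖)} ∧
            sSup {r : ℝ | ∃ (v : H) (q : V), (v, q) ≠ (0, 0) ∧
                r = (a u v + b v p - b u q + ε ^ 2 * c p q) /
                    (‖v‖ + weakSeminorm b q + ε * ‖q‖)} ≤
              K * (‖u‖ + weakSeminorm b p + ε * ‖p‖) := by
  refine ⟨(1+C)*(2*C*(1+C)+2*C+1) + C + 2, by positivity, ?_⟩
  intro H _ _ _ V _ _ _ a c b ha hc haC haE hcC hcE hb ε hε hε1 u p
  set K : ℝ := (1+C)*(2*C*(1+C)+2*C+1) + C + 2 with hKdef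
  have hK0 : 0 < K := by positivity
  set X : ℝ := ‖u‖ + weakSeminorm b p + ε * ‖p‖ with hXdef
  set T : Set ℝ := {r : ℝ | ∃ (v : H) (q : V), (v, q) ≠ (0, 0) ∧
                r = (a u v + b v p - b u q + ε ^ 2 * c p q) /
                    (‖v‖ + weakSeminorm b q + ε * ‖q‖)} with hTdef
  have hwsp : 0 ≤ weakSeminorm b p := ws_nonneg b hb p
  have hX0 : 0 ≤ X := by positivity
  -- denominator positivity
  have hden : ∀ (v : H) (q : V), (v, q) ≠ (0, 0) →
      0 < ‖v‖ + weakSeminorm b q + ε * ‖q‖ := by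
    intro v q hvq
    have hq : 0 ≤ weakSeminorm b q := ws_nonneg b hb q
    rcases eq_or_ne v 0 with rfl | hv
    · have hq0 : q ≠ 0 := by
        intro h; exact hvq (by simp [h])
      have h1 : 0 < ‖q‖ := norm_pos_iff.mpr hq0
      have h2 : 0 < ε * ‖q‖ := by positivity
      simp only [norm_zero]
      linarith
    · have h1 : 0 < ‖v‖ := norm_pos_iff.mpr hv
      have h2 : 0 ≤ ε * ‖q‖ := by positivity
      linarith
  -- every element of T is at most (C+1) * X
  have hkey : ∀ r ∈ T, r ≤ (C + 1) * X := by
    rintro r ⟨v, q, hvq, rfl⟩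
    have hD := hden v q hvq
    rw [div_le_iff₀ hD]
    have h1 : a u v ≤ C * ‖u‖ * ‖v‖ := le_trans (le_abs_self _) (haC u v)
    have h2 : b v p ≤ weakSeminorm b p * ‖v‖ := b_le_ws b hb v p
    have h3 : -(b u q) ≤ weakSeminorm b q * ‖u‖ := by
      have := b_le_ws b hb (-u) q
      simpa using this
    have h4 : ε ^ 2 * c p q ≤ C * (ε * ‖p‖) * (ε * ‖q‖) := by
      have h5 : c p q ≤ C * ‖p‖ * ‖q‖ := le_trans (le_abs_self _) (hcC p q)
      have h6 : ε ^ 2 * c p q ≤ ε ^ 2 * (C * ‖p‖ * ‖q‖) :=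
        mul_le_mul_of_nonneg_left h5 (by positivity)
      calc ε ^ 2 * c p q ≤ ε ^ 2 * (C * ‖p‖ * ‖q‖) := h6
        _ = C * (ε * ‖p‖) * (ε * ‖q‖) := by ring
    have hwq : 0 ≤ weakSeminorm b q := ws_nonneg b hb q
    have hN : a u v + b v p - b u q + ε ^ 2 * c p q ≤
        C * ‖u‖ * ‖v‖ + weakSeminorm b p * ‖v‖ + weakSeminorm b q * ‖u‖
          + C * (ε * ‖p‖) * (ε * ‖q‖) := by linarith
    have := arith_upper C ‖u‖ ‖v‖ (weakSeminorm b p) (weakSeminorm b q)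
      (ε * ‖p‖) (ε * ‖q‖) _ hC (norm_nonneg u) (norm_nonneg v) hwsp hwq
      (by positivity) (by positivity) hN
    calc a u v + b v p - b u q + ε ^ 2 * c p q
        ≤ (C + 1) * (‖u‖ + weakSeminorm b p + ε * ‖p‖)
            * (‖v‖ + weakSeminorm b q + ε * ‖q‖) := this
      _ = (C + 1) * X * (‖v‖ + weakSeminorm b q + ε * ‖q‖) := by rw [hXdef]
  have hbddT : BddAbove T := ⟨(C + 1) * X, hkey⟩
  have hCK : C + 1 ≤ K := by rw [hKdef]; exact arith_CK C hC
  -- upper bound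
  have hupper : sSup T ≤ K * X := by
    apply Real.sSup_le _ (by positivity)
    intro r hr
    calc r ≤ (C + 1) * X := hkey r hr
      _ ≤ K * X := mul_le_mul_of_nonneg_right hCK hX0
  refine ⟨?_, hupper⟩
  -- lower bound
  by_cases hup : u = 0 ∧ p = 0
  · obtain ⟨rfl, rfl⟩ := hup
    have hX : X = 0 := by
      simp [hXdef, ws_zero b hb]
    rw [hX, mul_zero]
    apply Real.sSup_nonneg
    rintro r ⟨v, q, hvq, rfl⟩
    have h0 : a 0 v + b v 0 - b 0 q + ε ^ 2 * c 0 q = 0 := by simp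
    rw [h0]
    simp
  · have hup' : (u, p) ≠ ((0 : H), (0 : V)) := by
      simp only [ne_eq, Prod.mk.injEq, not_and]
      intro h1 h2
      exact hup ⟨h1, h2⟩
    have hXpos : 0 < X := hden u p hup'
    set S : ℝ := sSup T with hSdef
    have hr0 : (a u u + b u p - b u p + ε ^ 2 * c p p) / X ∈ T := ⟨u, p, hup', rfl⟩
    have hr0S : (a u u + ε ^ 2 * c p p) / X ≤ S := by
      have he : a u u + b u p - b u p + ε ^ 2 * c p p = a u u + ε ^ 2 * c p p := by ring
      rw [he] at hr0
      exact le_csSup hbddT hr0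
    have hnum0 : C⁻¹ * (‖u‖ ^ 2 + ε ^ 2 * ‖p‖ ^ 2) ≤ a u u + ε ^ 2 * c p p := by
      have h1 := haE u
      have h2 := hcE p
      have h3 : ε ^ 2 * (C⁻¹ * ‖p‖ ^ 2) ≤ ε ^ 2 * c p p :=
        mul_le_mul_of_nonneg_left h2 (by positivity)
      nlinarith
    have hnum0' : 0 ≤ a u u + ε ^ 2 * c p p := by
      have : 0 ≤ C⁻¹ * (‖u‖ ^ 2 + ε ^ 2 * ‖p‖ ^ 2) := by positivity
      linarith
    have hS0 : 0 ≤ S := le_trans (div_nonneg hnum0' hXpos.le) hr0S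
    have h1 : ‖u‖ ^ 2 + ε ^ 2 * ‖p‖ ^ 2 ≤ C * (S * X) := by
      have h1a : a u u + ε ^ 2 * c p p ≤ S * X := (div_le_iff₀ hXpos).mp hr0S
      exact (inv_mul_le_iff₀ hC).mp (le_trans hnum0 h1a)
    have h2 : weakSeminorm b p ≤ S + C * ‖u‖ := by
      apply ws_le_of_forall b (by positivity) p
      intro v hv
      have hv0 : ((v, (0:V)) : H × V) ≠ (0, 0) := by
        simp [Prod.ext_iff, hv]
      have hmem : (a u v + b v p - b u 0 + ε ^ 2 * c p 0) /
          (‖v‖ + weakSeminorm b 0 + ε * ‖(0:V)‖) ∈ T := ⟨v, 0, hv0, rfl⟩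
      have hsimp : (a u v + b v p - b u 0 + ε ^ 2 * c p 0) /
          (‖v‖ + weakSeminorm b 0 + ε * ‖(0:V)‖) = (a u v + b v p) / ‖v‖ := by
        simp [ws_zero b hb]
      rw [hsimp] at hmem
      have hle : (a u v + b v p) / ‖v‖ ≤ S := le_csSup hbddT hmem
      have hnv : 0 < ‖v‖ := norm_pos_iff.mpr hv
      have hle2 : a u v + b v p ≤ S * ‖v‖ := (div_le_iff₀ hnv).mp hle
      have hav : -(C * ‖u‖ * ‖v‖) ≤ a u v := neg_le_of_abs_le (haC u v)
      nlinarith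
    -- conclude
    rw [inv_mul_le_iff₀ hK0]
    set Y : ℝ := ‖u‖ + ε * ‖p‖ with hYdef
    have hY0 : 0 ≤ Y := by positivity
    have hYsq : Y ^ 2 ≤ 2 * (‖u‖ ^ 2 + ε ^ 2 * ‖p‖ ^ 2) := by
      rw [hYdef]
      linarith only [sq_nonneg (‖u‖ - ε * ‖p‖)]
    have hXY : X ≤ (1 + C) * Y + S := by
      have hnu : (0:ℝ) ≤ ‖u‖ := norm_nonneg u
      have hep : (0:ℝ) ≤ ε * ‖p‖ := by positivity
      have hCu : C * ‖u‖ ≤ C * Y := by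
        have hcp : 0 ≤ C * (ε * ‖p‖) := by positivity
        rw [hYdef]
        linarith only [hcp]
      rw [hXdef, hYdef]
      rw [hYdef] at hCu
      linarith
    have h5 : (2 * C * S) * X ≤ (2 * C * S) * ((1 + C) * Y + S) :=
      mul_le_mul_of_nonneg_left hXY (by positivity)
    have h4 : 2 * (‖u‖ ^ 2 + ε ^ 2 * ‖p‖ ^ 2) ≤ (2 * C * S) * X := by
      linarith only [h1]
    have hY2 : Y ^ 2 ≤ 2 * C * S * ((1 + C) * Y + S) := by
      linarith only [hYsq, h4, h5]
    have hfin := arith_key C S Y X hC hS0 hY0 hXY hY2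
    rw [hKdef]
    exact hfin
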